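/- arXiv:1510.03481 — 2 statements merged into one kernel-verified Lean document; each statement's English description precedes it below -/
import Mathlib

section
/- Let G be a bipartite graph with parts A, B such that every vertex in A has degree a and every vertex in B has degree b, with adjacency matrix eigenvalues labeled |λ₁| ≥ |λ₂| ≥ ⋯. Then for any subsets X ⊆ A and Y ⊆ B, the number e(X,Y) of edges between X and Y satisfies |e(X,Y) − (a/|B|)·|X||Y|| ≤ λ₃·√(|X||Y|), where λ₃ is the third largest eigenvalue in absolute value of the adjacency matrix of G. -/
open Matrix

section
set_option linter.unusedSectionVars false
variable {n : Type} [Fintype n] [DecidableEq n]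

lemma inner_eq_dot (x y : EuclideanSpace ℝ n) : (inner ℝ x y : ℝ) = (x : n → ℝ) ⬝ᵥ (y : n → ℝ) := by
  simp [PiLp.inner_apply, dotProduct, mul_comm]

lemma dot_sum {ι : Type} (s : Finset ι) (v : n → ℝ) (f : ι → n → ℝ) :
    v ⬝ᵥ (∑ k ∈ s, f k) = ∑ k ∈ s, v ⬝ᵥ f k := by
  simp [dotProduct, Finset.mul_sum]
  rw [Finset.sum_comm]

lemma mulVec_basis (M : Matrix n n ℝ) (hM : M.IsHermitian) (k : n) :
    M *ᵥ (hM.eigenvectorBasis k : n → ℝ) = hM.eigenvalues k • (hM.eigenvectorBasis k : n → ℝ) :=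
  hM.mulVec_eigenvectorBasis k

lemma basis_dot (M : Matrix n n ℝ) (hM : M.IsHermitian) (k l : n) :
    (hM.eigenvectorBasis k : n → ℝ) ⬝ᵥ (hM.eigenvectorBasis l : n → ℝ)
      = if k = l then 1 else 0 := by
  rw [← inner_eq_dot]
  have := hM.eigenvectorBasis.orthonormal
  rw [orthonormal_iff_ite] at this
  exact this k l

lemma sum_repr_dot (M : Matrix n n ℝ) (hM : M.IsHermitian) (v : n → ℝ) :
    v = ∑ k, ((hM.eigenvectorBasis k : n → ℝ) ⬝ᵥ v) • (hM.eigenvectorBasis k : n → ℝ) := by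
  have h := hM.eigenvectorBasis.sum_repr' ((WithLp.equiv 2 (n → ℝ)).symm v)
  have h2 := congrArg (WithLp.ofLp (p := 2)) h
  simpa [inner_eq_dot] using h2.symm

lemma parseval_dot (M : Matrix n n ℝ) (hM : M.IsHermitian) (v w : n → ℝ) :
    v ⬝ᵥ w = ∑ k, ((hM.eigenvectorBasis k : n → ℝ) ⬝ᵥ v) * ((hM.eigenvectorBasis k : n → ℝ) ⬝ᵥ w) := by
  conv_lhs => rw [sum_repr_dot M hM w, dot_sum]
  apply Finset.sum_congr rfl
  intro k _
  rw [dotProduct_smul, smul_eq_mul, dotProduct_comm v]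
  exact mul_comm _ _

lemma spec_sum_dot (M : Matrix n n ℝ) (hM : M.IsHermitian) (v w : n → ℝ) :
    v ⬝ᵥ (M *ᵥ w) = ∑ k, hM.eigenvalues k *
      (((hM.eigenvectorBasis k : n → ℝ) ⬝ᵥ v) * ((hM.eigenvectorBasis k : n → ℝ) ⬝ᵥ w)) := by
  conv_lhs => rw [sum_repr_dot M hM w]
  have : M *ᵥ (∑ k, ((hM.eigenvectorBasis k : n → ℝ) ⬝ᵥ w) • (hM.eigenvectorBasis k : n → ℝ))
      = ∑ k, ((hM.eigenvectorBasis k : n → ℝ) ⬝ᵥ w) • (hM.eigenvalues k • (hM.eigenvectorBasis k : n → ℝ)) := by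
    rw [← Matrix.mulVecLin_apply, map_sum]
    apply Finset.sum_congr rfl
    intro k _
    rw [_root_.map_smul, Matrix.mulVecLin_apply, mulVec_basis M hM]
  rw [this, dot_sum]
  apply Finset.sum_congr rfl
  intro k _
  rw [dotProduct_smul, dotProduct_smul, smul_eq_mul, smul_eq_mul,
    dotProduct_comm v]
  ring

lemma eig_orth_dot (M : Matrix n n ℝ) (hM : M.IsHermitian) (z : n → ℝ) (ν : ℝ)
    (hz : M *ᵥ z = ν • z) (k : n) (hne : hM.eigenvalues k ≠ ν) :
    (hM.eigenvectorBasis k : n → ℝ) ⬝ᵥ z = 0 := by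
  have hMt : Mᵀ = M := by
    rw [← Matrix.conjTranspose_eq_transpose_of_trivial]; exact hM.eq
  have h1 : (hM.eigenvectorBasis k : n → ℝ) ⬝ᵥ (M *ᵥ z)
      = (M *ᵥ (hM.eigenvectorBasis k : n → ℝ)) ⬝ᵥ z := by
    rw [Matrix.dotProduct_mulVec, ← Matrix.mulVec_transpose, hMt]
  rw [hz, mulVec_basis M hM, smul_dotProduct, dotProduct_smul,
    smul_eq_mul, smul_eq_mul] at h1
  rcases mul_eq_mul_right_iff.mp h1.symm with h | h
  · exact absurd h hne
  · exact h

end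

lemma spec_bound {A B : Type} [Fintype A] [Fintype B] (a b : ℕ)
    (N : Matrix A B ℝ) (hN : ∀ i j, N i j = 0 ∨ N i j = 1)
    (ha : ∀ i, ∑ j, N i j = (a : ℝ)) (hb : ∀ j, ∑ i, N i j = (b : ℝ))
    (M : Matrix (A ⊕ B) (A ⊕ B) ℝ) (hMdef : M = Matrix.fromBlocks 0 N Nᵀ 0)
    (μ : ℝ) (u : (A ⊕ B) → ℝ) (hu : u ≠ 0) (hMu : M *ᵥ u = μ • u) :
    |μ| ≤ Real.sqrt ((a : ℝ) * b) := by
  have hMnn : ∀ p q, 0 ≤ M p q := by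
    intro p q
    rcases p with i | j <;> rcases q with i' | j' <;>
      simp [hMdef, Matrix.fromBlocks] <;> rcases hN _ _ with h | h <;> rw [h] <;> norm_num
  have hrow : ∀ q : A ⊕ B, ∑ r, M q r = Sum.elim (fun _ => (a:ℝ)) (fun _ => (b:ℝ)) q := by
    intro q
    rcases q with i | j <;>
      simp [hMdef, Fintype.sum_sum_type, Matrix.fromBlocks, ha, hb]
  obtain ⟨p1, hp1⟩ := Function.ne_iff.mp hu
  obtain ⟨p0, -, hmax⟩ := Finset.exists_max_image Finset.univ (fun p => |u p|)
    ⟨p1, Finset.mem_univ p1⟩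
  have hup0 : 0 < |u p0| := lt_of_lt_of_le (abs_pos.mpr hp1) (hmax p1 (Finset.mem_univ p1))
  have hM2 : M *ᵥ (M *ᵥ u) = (μ^2) • u := by
    rw [hMu, Matrix.mulVec_smul, hMu, smul_smul]; ring_nf
  have hstep : ∀ q, |(M *ᵥ u) q| ≤ (∑ r, M q r) * |u p0| := by
    intro q
    calc |(M *ᵥ u) q| = |∑ r, M q r * u r| := rfl
      _ ≤ ∑ r, |M q r * u r| := Finset.abs_sum_le_sum_abs _ _
      _ ≤ ∑ r, M q r * |u p0| := by
          apply Finset.sum_le_sum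
          intro r _
          rw [abs_mul, abs_of_nonneg (hMnn q r)]
          exact mul_le_mul_of_nonneg_left (hmax r (Finset.mem_univ r)) (hMnn q r)
      _ = (∑ r, M q r) * |u p0| := by rw [Finset.sum_mul]
  have hkey : μ^2 * |u p0| ≤ (a * b : ℝ) * |u p0| := by
    have h1 : |μ^2 * u p0| ≤ ∑ q, M p0 q * ((∑ r, M q r) * |u p0|) := by
      have : μ^2 * u p0 = ∑ q, M p0 q * (M *ᵥ u) q := by
        have := congrFun hM2 p0
        simp only [Pi.smul_apply, smul_eq_mul] at this
        rw [← this]; rfl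
      rw [this]
      refine le_trans (Finset.abs_sum_le_sum_abs _ _) (Finset.sum_le_sum fun q _ => ?_)
      rw [abs_mul, abs_of_nonneg (hMnn p0 q)]
      exact mul_le_mul_of_nonneg_left (hstep q) (hMnn p0 q)
    have h2 : ∑ q, M p0 q * ((∑ r, M q r) * |u p0|) = (a * b : ℝ) * |u p0| := by
      simp only [hrow, ← mul_assoc]
      rw [← Finset.sum_mul]
      congr 1
      rcases p0 with i | j <;>
          simp [hMdef, Fintype.sum_sum_type, Matrix.fromBlocks, ← Finset.sum_mul, ha, hb] <;>
        first
          | ring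
          | skip
    calc μ^2 * |u p0| ≤ |μ^2 * u p0| := by
          rw [abs_mul, abs_pow, sq_abs]
      _ ≤ (a*b:ℝ) * |u p0| := h1.trans_eq h2
  have hsq : μ^2 ≤ (a*b : ℝ) := le_of_mul_le_mul_right (by linarith [hkey]) hup0
  calc |μ| = Real.sqrt (μ^2) := (Real.sqrt_sq_eq_abs μ).symm
    _ ≤ Real.sqrt ((a:ℝ)*b) := Real.sqrt_le_sqrt hsq


lemma plane_contra (P1 Q1 P2 Q2 P3 Q3 : ℝ)
    (h12 : P1 * P2 + Q1 * Q2 = 0) (h13 : P1 * P3 + Q1 * Q3 = 0)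
    (h23 : P2 * P3 + Q2 * Q3 = 0) (g1 : 0 < P1 * P1 + Q1 * Q1)
    (g2 : 0 < P2 * P2 + Q2 * Q2) (g3 : 0 < P3 * P3 + Q3 * Q3) : False := by
  have h1' : 0 < P1^2 + Q1^2 := by nlinarith [g1]
  have h2' : 0 < P2^2 + Q2^2 := by nlinarith [g2]
  have h3' : 0 < P3^2 + Q3^2 := by nlinarith [g3]
  have hAB : (P1*Q2 - P2*Q1) * (P1*Q3 - P3*Q1) = 0 := by nlinarith [h12, h13, h23]
  have e2 : (P1^2+Q1^2) * (P2^2+Q2^2) = (P1*Q2 - P2*Q1)^2 := by nlinarith [h12]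
  have e3 : (P1^2+Q1^2) * (P3^2+Q3^2) = (P1*Q3 - P3*Q1)^2 := by nlinarith [h13]
  nlinarith [mul_pos (mul_pos h1' h2') (mul_pos h1' h3'), hAB, e2, e3,
    sq_nonneg ((P1*Q2 - P2*Q1) * (P1*Q3 - P3*Q1))]

set_option maxHeartbeats 1600000 in
lemma key_struct {A B : Type} [Fintype A] [Fintype B] [DecidableEq A] [DecidableEq B]
    [Nonempty B] [Nonempty A] (a b : ℕ)
    (N : Matrix A B ℝ) (hN : ∀ i j, N i j = 0 ∨ N i j = 1)
    (ha : ∀ i, ∑ j, N i j = (a : ℝ)) (hb : ∀ j, ∑ i, N i j = (b : ℝ))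
    (M : Matrix (A ⊕ B) (A ⊕ B) ℝ)
    (hMdef : M = Matrix.fromBlocks 0 N Nᵀ 0)
    (hM : M.IsHermitian)
    (hcard : 2 < Fintype.card (A ⊕ B))
    (e : Fin (Fintype.card (A ⊕ B)) ≃ (A ⊕ B))
    (hsort : ∀ i j, i ≤ j → |hM.eigenvalues (e j)| ≤ |hM.eigenvalues (e i)|)
    (haR : 0 < (a : ℝ)) (hbR : 0 < (b : ℝ))
    (hab : (a : ℝ) * Fintype.card A = (b : ℝ) * Fintype.card B)
    (k : A ⊕ B) (hk : |hM.eigenvalues (e ⟨2, hcard⟩)| < |hM.eigenvalues k|) :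
    ∃ α β : ℝ, (hM.eigenvectorBasis k : (A ⊕ B) → ℝ)
      = Sum.elim (fun _ => α) (fun _ => β) := by
  classical
  have hcA : 0 < (Fintype.card A : ℝ) := by
    have := Fintype.card_pos (α := A); positivity
  have hcB : 0 < (Fintype.card B : ℝ) := by
    have := Fintype.card_pos (α := B); positivity
  set r : ℝ := |hM.eigenvalues (e ⟨2, hcard⟩)| with hr
  set uk : (A ⊕ B) → ℝ := (hM.eigenvectorBasis k : (A ⊕ B) → ℝ) with huk
  have hMuk : M *ᵥ uk = hM.eigenvalues k • uk := mulVec_basis M hM k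
  set μ : ℝ := hM.eigenvalues k with hμ
  set SA : ℝ := ∑ i, uk (Sum.inl i) with hSA
  set SB : ℝ := ∑ j, uk (Sum.inr j) with hSB
  set α : ℝ := SA / Fintype.card A with hα
  set β : ℝ := SB / Fintype.card B with hβ
  set s : (A ⊕ B) → ℝ := Sum.elim (fun _ => α) (fun _ => β) with hs
  set t : (A ⊕ B) → ℝ := uk - s with htdef
  refine ⟨α, β, ?_⟩
  rw [show (Sum.elim (fun _ => α) (fun _ => β) : (A ⊕ B) → ℝ) = s from rfl]
  by_contra hukns
  have ht : t ≠ 0 := fun h => hukns (by rwa [htdef, sub_eq_zero] at h)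
  -- block sum identities
  have hA1 : (b : ℝ) * SB = μ * SA := by
    have h := congrArg (fun f : (A ⊕ B) → ℝ => ∑ i : A, f (Sum.inl i)) hMuk
    simp only [Pi.smul_apply, smul_eq_mul] at h
    rw [← Finset.mul_sum, ← hSA] at h
    rw [← h]
    have : ∀ i : A, (M *ᵥ uk) (Sum.inl i) = ∑ j : B, N i j * uk (Sum.inr j) := by
      intro i
      simp [hMdef, mulVec, dotProduct, Fintype.sum_sum_type, Matrix.fromBlocks]
    simp only [this]
    rw [Finset.sum_comm]
    simp only [← Finset.sum_mul, hb]
    rw [← Finset.mul_sum]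
  have hB1 : (a : ℝ) * SA = μ * SB := by
    have h := congrArg (fun f : (A ⊕ B) → ℝ => ∑ j : B, f (Sum.inr j)) hMuk
    simp only [Pi.smul_apply, smul_eq_mul] at h
    rw [← Finset.mul_sum, ← hSB] at h
    rw [← h]
    have : ∀ j : B, (M *ᵥ uk) (Sum.inr j) = ∑ i : A, N i j * uk (Sum.inl i) := by
      intro j
      simp [hMdef, mulVec, dotProduct, Fintype.sum_sum_type, Matrix.fromBlocks, transpose]
    simp only [this]
    rw [Finset.sum_comm]
    simp only [← Finset.sum_mul, ha]
    rw [← Finset.mul_sum]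
  have hMs : M *ᵥ s = μ • s := by
    funext p
    rcases p with i | j
    · have h1 : (M *ᵥ s) (Sum.inl i) = (a : ℝ) * β := by
        simp [hMdef, mulVec, dotProduct, Fintype.sum_sum_type, Matrix.fromBlocks, hs,
          ← Finset.sum_mul, ha]
      rw [h1]
      show (a : ℝ) * β = μ * α
      rw [hα, hβ]
      field_simp
      linear_combination SB * hab + (Fintype.card B : ℝ) * hA1
    · have h1 : (M *ᵥ s) (Sum.inr j) = (b : ℝ) * α := by
        simp [hMdef, mulVec, dotProduct, Fintype.sum_sum_type, Matrix.fromBlocks, hs,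
          transpose, ← Finset.sum_mul, hb]
      rw [h1]
      show (b : ℝ) * α = μ * β
      rw [hα, hβ]
      field_simp
      linear_combination (Fintype.card A : ℝ) * hB1 - SA * hab
  have hMt : M *ᵥ t = μ • t := by
    rw [htdef, Matrix.mulVec_sub, hMuk, hMs, smul_sub]
  have hts1 : ∑ i : A, t (Sum.inl i) = 0 := by
    simp only [htdef, Pi.sub_apply, Finset.sum_sub_distrib, ← hSA, hs, Sum.elim_inl,
      Finset.sum_const, Finset.card_univ, nsmul_eq_mul]
    rw [hα]
    field_simp
    ring
  have hts2 : ∑ j : B, t (Sum.inr j) = 0 := by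
    simp only [htdef, Pi.sub_apply, Finset.sum_sub_distrib, ← hSB, hs, Sum.elim_inr,
      Finset.sum_const, Finset.card_univ, nsmul_eq_mul]
    rw [hβ]
    field_simp
    ring
  -- the three orthogonal eigenvectors
  have hsa : Real.sqrt a * Real.sqrt a = (a : ℝ) := Real.mul_self_sqrt haR.le
  have hsb : Real.sqrt b * Real.sqrt b = (b : ℝ) := Real.mul_self_sqrt hbR.le
  have hsab : Real.sqrt ((a:ℝ) * b) = Real.sqrt a * Real.sqrt b :=
    Real.sqrt_mul (by positivity) _
  set z1 : (A ⊕ B) → ℝ := Sum.elim (fun _ => Real.sqrt a) (fun _ => Real.sqrt b) with hz1def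
  set z2 : (A ⊕ B) → ℝ := Sum.elim (fun _ => Real.sqrt a) (fun _ => -Real.sqrt b) with hz2def
  have hz1 : M *ᵥ z1 = Real.sqrt ((a:ℝ)*b) • z1 := by
    funext p
    rcases p with i | j
    · have h1 : (M *ᵥ z1) (Sum.inl i) = (a : ℝ) * Real.sqrt b := by
        simp [hMdef, mulVec, dotProduct, Fintype.sum_sum_type, Matrix.fromBlocks, hz1def,
          ← Finset.sum_mul, ha]
      rw [h1]
      show (a : ℝ) * Real.sqrt b = Real.sqrt ((a:ℝ)*b) * Real.sqrt a
      rw [hsab]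
      linear_combination (-Real.sqrt b) * hsa
    · have h1 : (M *ᵥ z1) (Sum.inr j) = (b : ℝ) * Real.sqrt a := by
        simp [hMdef, mulVec, dotProduct, Fintype.sum_sum_type, Matrix.fromBlocks, hz1def,
          transpose, ← Finset.sum_mul, hb]
      rw [h1]
      show (b : ℝ) * Real.sqrt a = Real.sqrt ((a:ℝ)*b) * Real.sqrt b
      rw [hsab]
      linear_combination (-Real.sqrt a) * hsb
  have hz2 : M *ᵥ z2 = (-Real.sqrt ((a:ℝ)*b)) • z2 := by
    funext p
    rcases p with i | j
    · have h1 : (M *ᵥ z2) (Sum.inl i) = (a : ℝ) * (-Real.sqrt b) := by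
        simp [hMdef, mulVec, dotProduct, Fintype.sum_sum_type, Matrix.fromBlocks, hz2def,
          ← Finset.sum_mul, ha]
      rw [h1]
      show (a : ℝ) * (-Real.sqrt b) = (-Real.sqrt ((a:ℝ)*b)) * Real.sqrt a
      rw [hsab]
      linear_combination Real.sqrt b * hsa
    · have h1 : (M *ᵥ z2) (Sum.inr j) = (b : ℝ) * Real.sqrt a := by
        simp [hMdef, mulVec, dotProduct, Fintype.sum_sum_type, Matrix.fromBlocks, hz2def,
          transpose, ← Finset.sum_mul, hb]
      rw [h1]
      show (b : ℝ) * Real.sqrt a = (-Real.sqrt ((a:ℝ)*b)) * (-Real.sqrt b)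
      rw [hsab]
      linear_combination (-Real.sqrt a) * hsb
  -- uk is nonzero, so spec_bound applies
  have hukne : uk ≠ 0 := by
    intro h0
    have hne := hM.eigenvectorBasis.orthonormal.ne_zero k
    apply hne
    apply (WithLp.equiv 2 ((A ⊕ B) → ℝ)).injective
    exact h0
  have hbnd : |μ| ≤ Real.sqrt ((a:ℝ)*b) :=
    spec_bound a b N hN ha hb M hMdef μ uk hukne hMuk
  have hrab : r < Real.sqrt ((a:ℝ)*b) := lt_of_lt_of_le hk hbnd
  -- indices
  set e0 : A ⊕ B := e ⟨0, by omega⟩ with he0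
  set e1 : A ⊕ B := e ⟨1, by omega⟩ with he1
  have hne01 : e0 ≠ e1 := by
    intro h
    have := e.injective h
    simp [Fin.ext_iff] at this
  have hsmall : ∀ k', k' ≠ e0 → k' ≠ e1 → |hM.eigenvalues k'| ≤ r := by
    intro k' h0 h1
    have hk' : k' = e (e.symm k') := (e.apply_symm_apply k').symm
    have hge : (⟨2, hcard⟩ : Fin (Fintype.card (A ⊕ B))) ≤ e.symm k' := by
      by_contra hlt
      push_neg at hlt
      have : (e.symm k').val < 2 := hlt
      interval_cases h : (e.symm k').val
      · apply h0; rw [hk']; congr 1; exact Fin.ext h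
      · apply h1; rw [hk']; congr 1; exact Fin.ext h
    rw [hk']
    exact hsort _ _ hge
  have horth : ∀ (z : (A ⊕ B) → ℝ) (ν : ℝ), M *ᵥ z = ν • z → r < |ν| →
      ∀ k', k' ≠ e0 → k' ≠ e1 → (hM.eigenvectorBasis k' : (A ⊕ B) → ℝ) ⬝ᵥ z = 0 := by
    intro z ν hz hν k' h0 h1
    apply eig_orth_dot M hM z ν hz
    intro heq
    have hsm := hsmall k' h0 h1
    rw [heq] at hsm
    exact absurd hsm (not_le.mpr hν)
  have hredu : ∀ (z : (A ⊕ B) → ℝ), (∀ k', k' ≠ e0 → k' ≠ e1 →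
      (hM.eigenvectorBasis k' : (A ⊕ B) → ℝ) ⬝ᵥ z = 0) → ∀ z' : (A ⊕ B) → ℝ,
      z ⬝ᵥ z' = ((hM.eigenvectorBasis e0 : (A ⊕ B) → ℝ) ⬝ᵥ z) * ((hM.eigenvectorBasis e0 : (A ⊕ B) → ℝ) ⬝ᵥ z')
        + ((hM.eigenvectorBasis e1 : (A ⊕ B) → ℝ) ⬝ᵥ z) * ((hM.eigenvectorBasis e1 : (A ⊕ B) → ℝ) ⬝ᵥ z') := by
    intro z hz z'
    rw [parseval_dot M hM z z']
    rw [← Finset.sum_subset (Finset.subset_univ ({e0, e1} : Finset (A ⊕ B)))]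
    · rw [Finset.sum_pair hne01]
    · intro k' _ hk'
      simp only [Finset.mem_insert, Finset.mem_singleton] at hk'
      push_neg at hk'
      rw [hz k' hk'.1 hk'.2, zero_mul]
  -- orthogonality conditions
  have o1 : ∀ k', k' ≠ e0 → k' ≠ e1 → (hM.eigenvectorBasis k' : (A ⊕ B) → ℝ) ⬝ᵥ z1 = 0 :=
    horth z1 _ hz1 (by rwa [abs_of_pos (by positivity : (0:ℝ) < Real.sqrt ((a:ℝ)*b))])
  have o2 : ∀ k', k' ≠ e0 → k' ≠ e1 → (hM.eigenvectorBasis k' : (A ⊕ B) → ℝ) ⬝ᵥ z2 = 0 :=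
    horth z2 _ hz2 (by rwa [abs_neg, abs_of_pos (by positivity : (0:ℝ) < Real.sqrt ((a:ℝ)*b))])
  have o3 : ∀ k', k' ≠ e0 → k' ≠ e1 → (hM.eigenvectorBasis k' : (A ⊕ B) → ℝ) ⬝ᵥ t = 0 :=
    horth t μ hMt hk
  -- dot product values
  have d12 : z1 ⬝ᵥ z2 = 0 := by
    simp only [dotProduct, Fintype.sum_sum_type, hz1def, hz2def, Sum.elim_inl, Sum.elim_inr,
      Finset.sum_const, Finset.card_univ, nsmul_eq_mul]
    nlinarith [hsa, hsb, hab]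
  have d13 : z1 ⬝ᵥ t = 0 := by
    simp only [dotProduct, Fintype.sum_sum_type, hz1def, Sum.elim_inl, Sum.elim_inr,
      ← Finset.mul_sum, hts1, hts2, mul_zero, add_zero]
  have d23 : z2 ⬝ᵥ t = 0 := by
    simp only [dotProduct, Fintype.sum_sum_type, hz2def, Sum.elim_inl, Sum.elim_inr]
    simp only [neg_mul, Finset.sum_neg_distrib, ← Finset.mul_sum, hts1, hts2, mul_zero,
      neg_zero, add_zero]
  have n1 : 0 < z1 ⬝ᵥ z1 := by
    simp only [dotProduct, Fintype.sum_sum_type, hz1def, Sum.elim_inl, Sum.elim_inr,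
      Finset.sum_const, Finset.card_univ, nsmul_eq_mul]
    have h1 := Fintype.card_pos (α := A)
    have h2 := Fintype.card_pos (α := B)
    nlinarith [hsa, hsb, hcA, hcB]
  have n2 : 0 < z2 ⬝ᵥ z2 := by
    simp only [dotProduct, Fintype.sum_sum_type, hz2def, Sum.elim_inl, Sum.elim_inr,
      Finset.sum_const, Finset.card_univ, nsmul_eq_mul, neg_mul, mul_neg, neg_neg]
    nlinarith [hsa, hsb, hcA, hcB]
  have n3 : 0 < t ⬝ᵥ t := by
    obtain ⟨p, hp⟩ := Function.ne_iff.mp ht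
    have : t ⬝ᵥ t = ∑ p, t p * t p := rfl
    rw [this]
    apply Finset.sum_pos'
    · intro q _; exact mul_self_nonneg _
    · exact ⟨p, Finset.mem_univ p, mul_self_pos.mpr hp⟩
  have h12 := hredu z1 o1 z2
  have h13 := hredu z1 o1 t
  have h23 := hredu z2 o2 t
  have g1 := hredu z1 o1 z1
  have g2 := hredu z2 o2 z2
  have g3 := hredu t o3 t
  rw [d12] at h12
  rw [d13] at h13
  rw [d23] at h23
  rw [g1] at n1
  rw [g2] at n2
  rw [g3] at n3
  exact plane_contra _ _ _ _ _ _ h12.symm h13.symm h23.symm n1 n2 n3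

set_option maxHeartbeats 1600000 in
/-- Expander mixing lemma for bipartite biregular graphs:
with eigenvalues of the adjacency matrix `M = [[0,N],[Nᵀ,0]]` enumerated in order
of decreasing absolute value (via the equiv `e`), the number of edges between
`X ⊆ A` and `Y ⊆ B` satisfies
`|e(X,Y) - (a/|B|)|X||Y|| ≤ |λ₃| √(|X||Y|)`. -/
theorem expander_mixing_bipartite
    (A B : Type) [Fintype A] [Fintype B] [DecidableEq A] [DecidableEq B]
    [Nonempty B] (a b : ℕ)
    (N : Matrix A B ℝ) (hN : ∀ i j, N i j = 0 ∨ N i j = 1)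
    (ha : ∀ i, ∑ j, N i j = (a : ℝ)) (hb : ∀ j, ∑ i, N i j = (b : ℝ))
    (M : Matrix (A ⊕ B) (A ⊕ B) ℝ)
    (hMdef : M = Matrix.fromBlocks 0 N Nᵀ 0)
    (hM : M.IsHermitian)
    (hcard : 2 < Fintype.card (A ⊕ B))
    (e : Fin (Fintype.card (A ⊕ B)) ≃ (A ⊕ B))
    (hsort : ∀ i j, i ≤ j → |hM.eigenvalues (e j)| ≤ |hM.eigenvalues (e i)|)
    (X : Finset A) (Y : Finset B) :
    |(∑ x ∈ X, ∑ y ∈ Y, N x y) -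
        ((a : ℝ) / (Fintype.card B : ℝ)) * X.card * Y.card| ≤
      |hM.eigenvalues (e ⟨2, hcard⟩)| * Real.sqrt ((X.card : ℝ) * Y.card) := by
  classical
  have hrnn : (0:ℝ) ≤ |hM.eigenvalues (e ⟨2, hcard⟩)| := abs_nonneg _
  rcases isEmpty_or_nonempty A with hAe | hA
  · have hX : X = ∅ := Finset.eq_empty_of_isEmpty X
    subst hX
    simp
  by_cases ha0 : a = 0
  · have hN0 : ∀ i j, N i j = 0 := by
      intro i j
      have hnn : ∀ j', j' ∈ Finset.univ → (0:ℝ) ≤ N i j' := by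
        intro j' _
        rcases hN i j' with h | h <;> rw [h] <;> norm_num
      have hz : ∑ j' : B, N i j' = 0 := by rw [ha i, ha0]; norm_num
      exact (Finset.sum_eq_zero_iff_of_nonneg hnn).mp hz j (Finset.mem_univ j)
    subst ha0
    have h1 : (∑ x ∈ X, ∑ y ∈ Y, N x y) = 0 :=
      Finset.sum_eq_zero fun i _ => Finset.sum_eq_zero fun j _ => hN0 i j
    rw [h1]
    simp only [Nat.cast_zero, zero_div, zero_mul, sub_zero, abs_zero]
    positivity
  -- main case
  have hcA : 0 < (Fintype.card A : ℝ) := by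
    have := Fintype.card_pos (α := A); positivity
  have hcB : 0 < (Fintype.card B : ℝ) := by
    have := Fintype.card_pos (α := B); positivity
  have hab : (a : ℝ) * Fintype.card A = (b : ℝ) * Fintype.card B := by
    have h1 : ∑ i : A, ∑ j : B, N i j = (a : ℝ) * Fintype.card A := by
      simp [ha, mul_comm]
    have h2 : ∑ i : A, ∑ j : B, N i j = (b : ℝ) * Fintype.card B := by
      rw [show ∑ i : A, ∑ j : B, N i j = ∑ j : B, ∑ i : A, N i j from Finset.sum_comm]; simp [hb, mul_comm]
    rw [← h1, h2]
  have haR : 0 < (a : ℝ) := by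
    have : 0 < a := Nat.pos_of_ne_zero ha0; positivity
  have hbR : 0 < (b : ℝ) := by
    rcases Nat.eq_zero_or_pos b with h | h
    · exfalso; rw [h] at hab; simp at hab; exact ha0 hab
    · positivity
  -- the centered indicator vectors
  set p : ℝ := (X.card : ℝ) / (Fintype.card A : ℝ) with hp
  set q : ℝ := (Y.card : ℝ) / (Fintype.card B : ℝ) with hq
  set x : A → ℝ := fun i => (if i ∈ X then (1:ℝ) else 0) - p with hx
  set y : B → ℝ := fun j => (if j ∈ Y then (1:ℝ) else 0) - q with hy
  set v : A ⊕ B → ℝ := Sum.elim x 0 with hv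
  set w : A ⊕ B → ℝ := Sum.elim 0 y with hw
  have hsx : ∑ i, x i = 0 := by
    simp [hx, Finset.sum_sub_distrib]
    field_simp [hp]
    rw [hp]; field_simp; ring
  have hsy : ∑ j, y j = 0 := by
    simp [hy, Finset.sum_sub_distrib]
    field_simp [hq]
    rw [hq]; field_simp; ring
  have hident : v ⬝ᵥ (M *ᵥ w) = (∑ i ∈ X, ∑ j ∈ Y, N i j) -
      ((a : ℝ) / (Fintype.card B : ℝ)) * X.card * Y.card := by
    have h0 : v ⬝ᵥ (M *ᵥ w) = ∑ i : A, x i * ∑ j : B, N i j * y j := by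
      simp [hMdef, mulVec, dotProduct, Fintype.sum_sum_type, hv, hw, Finset.mul_sum]
    have h1 : ∀ i, ∑ j : B, N i j * y j = (∑ j ∈ Y, N i j) - q * a := by
      intro i
      simp only [hy, mul_sub, Finset.sum_sub_distrib, mul_ite, mul_one, mul_zero]
      rw [Finset.sum_ite_mem, Finset.univ_inter, ← Finset.sum_mul, ha i, mul_comm]
    have h2 : ∑ i : A, x i * ((∑ j ∈ Y, N i j) - q * a)
        = ∑ i : A, x i * (∑ j ∈ Y, N i j) := by
      simp only [mul_sub, Finset.sum_sub_distrib, ← Finset.sum_mul, hsx]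
      ring
    have h3 : ∑ i : A, x i * (∑ j ∈ Y, N i j)
        = (∑ i ∈ X, ∑ j ∈ Y, N i j) - p * ((b:ℝ) * Y.card) := by
      simp only [hx, sub_mul, Finset.sum_sub_distrib, ite_mul, one_mul, zero_mul]
      rw [Finset.sum_ite_mem, Finset.univ_inter, ← Finset.mul_sum]
      congr 2
      rw [show ∑ i : A, ∑ j ∈ Y, N i j = ∑ j ∈ Y, ∑ i : A, N i j from Finset.sum_comm]
      simp [hb, mul_comm]
    rw [h0]
    simp only [h1, h2, h3]
    congr 1
    rw [hp]
    field_simp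
    linear_combination (-(X.card * Y.card : ℝ)) * hab
  -- norm bounds
  have hvv : v ⬝ᵥ v ≤ (X.card : ℝ) := by
    have hterm : ∀ i : A, x i * x i
        = (if i ∈ X then (1:ℝ) else 0) - 2*p*(if i ∈ X then (1:ℝ) else 0) + p^2 := by
      intro i; by_cases hi : i ∈ X <;> simp [hx, hi] <;> ring
    have h0 : v ⬝ᵥ v = ∑ i : A, x i * x i := by
      simp [hv, dotProduct, Fintype.sum_sum_type]
    have hbool : ∑ i : A, (if i ∈ X then (1:ℝ) else 0) = X.card := by
      rw [Finset.sum_ite_mem, Finset.univ_inter]; simp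
    rw [h0]
    simp only [hterm, Finset.sum_add_distrib, Finset.sum_sub_distrib, ← Finset.mul_sum, hbool,
      Finset.sum_const, Finset.card_univ, nsmul_eq_mul]
    have hppos : 0 ≤ p^2 * (Fintype.card A : ℝ) := by positivity
    have : (Fintype.card A : ℝ) * p^2 = (X.card:ℝ) * p := by
      rw [hp]; field_simp
    rw [this]
    have hXnn : (0:ℝ) ≤ (X.card : ℝ) := Nat.cast_nonneg _
    have hpnn : 0 ≤ p := by rw [hp]; positivity
    nlinarith [mul_nonneg hpnn hXnn]
  have hww : w ⬝ᵥ w ≤ (Y.card : ℝ) := by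
    have hterm : ∀ j : B, y j * y j
        = (if j ∈ Y then (1:ℝ) else 0) - 2*q*(if j ∈ Y then (1:ℝ) else 0) + q^2 := by
      intro j; by_cases hj : j ∈ Y <;> simp [hy, hj] <;> ring
    have h0 : w ⬝ᵥ w = ∑ j : B, y j * y j := by
      simp [hw, dotProduct, Fintype.sum_sum_type]
    have hbool : ∑ j : B, (if j ∈ Y then (1:ℝ) else 0) = Y.card := by
      rw [Finset.sum_ite_mem, Finset.univ_inter]; simp
    rw [h0]
    simp only [hterm, Finset.sum_add_distrib, Finset.sum_sub_distrib, ← Finset.mul_sum, hbool,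
      Finset.sum_const, Finset.card_univ, nsmul_eq_mul]
    have : (Fintype.card B : ℝ) * q^2 = (Y.card:ℝ) * q := by
      rw [hq]; field_simp
    rw [this]
    have hYnn : (0:ℝ) ≤ (Y.card : ℝ) := Nat.cast_nonneg _
    have hqnn : 0 ≤ q := by rw [hq]; positivity
    nlinarith [mul_nonneg hqnn hYnn]
  have hvvnn : 0 ≤ v ⬝ᵥ v := by
    have h0 : v ⬝ᵥ v = ∑ pq, v pq * v pq := rfl
    rw [h0]; exact Finset.sum_nonneg fun pq _ => mul_self_nonneg _
  have hwwnn : 0 ≤ w ⬝ᵥ w := by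
    have h0 : w ⬝ᵥ w = ∑ pq, w pq * w pq := rfl
    rw [h0]; exact Finset.sum_nonneg fun pq _ => mul_self_nonneg _
  -- key orthogonality
  have hkey : ∀ k : A ⊕ B, |hM.eigenvalues (e ⟨2, hcard⟩)| < |hM.eigenvalues k| →
      (hM.eigenvectorBasis k : (A ⊕ B) → ℝ) ⬝ᵥ v = 0 ∧
      (hM.eigenvectorBasis k : (A ⊕ B) → ℝ) ⬝ᵥ w = 0 := by
    intro k hk
    obtain ⟨α, β, hcst⟩ := key_struct a b N hN ha hb M hMdef hM hcard e hsort haR hbR hab k hk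
    constructor
    · rw [hcst]
      simp [dotProduct, Fintype.sum_sum_type, hv, ← Finset.mul_sum, hsx]
    · rw [hcst]
      simp [dotProduct, Fintype.sum_sum_type, hw, ← Finset.mul_sum, hsy]
  -- final chain
  rw [← hident, spec_sum_dot M hM v w]
  calc |∑ k, hM.eigenvalues k *
        (((hM.eigenvectorBasis k : (A ⊕ B) → ℝ) ⬝ᵥ v) * ((hM.eigenvectorBasis k : (A ⊕ B) → ℝ) ⬝ᵥ w))|
      ≤ ∑ k, |hM.eigenvalues k *
        (((hM.eigenvectorBasis k : (A ⊕ B) → ℝ) ⬝ᵥ v) * ((hM.eigenvectorBasis k : (A ⊕ B) → ℝ) ⬝ᵥ w))| :=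
        Finset.abs_sum_le_sum_abs _ _
    _ ≤ ∑ k, |hM.eigenvalues (e ⟨2, hcard⟩)| *
        (|(hM.eigenvectorBasis k : (A ⊕ B) → ℝ) ⬝ᵥ v| * |(hM.eigenvectorBasis k : (A ⊕ B) → ℝ) ⬝ᵥ w|) := by
        apply Finset.sum_le_sum
        intro k _
        rcases le_or_gt |hM.eigenvalues k| |hM.eigenvalues (e ⟨2, hcard⟩)| with h | h
        · rw [abs_mul, abs_mul]
          exact mul_le_mul_of_nonneg_right h (by positivity)
        · rw [(hkey k h).1]
          simp only [zero_mul, mul_zero, abs_zero]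
          positivity
    _ = |hM.eigenvalues (e ⟨2, hcard⟩)| *
        ∑ k, |(hM.eigenvectorBasis k : (A ⊕ B) → ℝ) ⬝ᵥ v| * |(hM.eigenvectorBasis k : (A ⊕ B) → ℝ) ⬝ᵥ w| := by
        rw [Finset.mul_sum]
    _ ≤ |hM.eigenvalues (e ⟨2, hcard⟩)| *
        (Real.sqrt (∑ k, ((hM.eigenvectorBasis k : (A ⊕ B) → ℝ) ⬝ᵥ v)^2) *
         Real.sqrt (∑ k, ((hM.eigenvectorBasis k : (A ⊕ B) → ℝ) ⬝ᵥ w)^2)) := by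
        apply mul_le_mul_of_nonneg_left _ hrnn
        have hcs := Real.sum_mul_le_sqrt_mul_sqrt Finset.univ
          (fun k => |(hM.eigenvectorBasis k : (A ⊕ B) → ℝ) ⬝ᵥ v|)
          (fun k => |(hM.eigenvectorBasis k : (A ⊕ B) → ℝ) ⬝ᵥ w|)
        simpa [sq_abs] using hcs
    _ ≤ |hM.eigenvalues (e ⟨2, hcard⟩)| * Real.sqrt ((X.card : ℝ) * Y.card) := by
        apply mul_le_mul_of_nonneg_left _ hrnn
        have hpv : ∑ k, ((hM.eigenvectorBasis k : (A ⊕ B) → ℝ) ⬝ᵥ v)^2 = v ⬝ᵥ v := by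
          rw [parseval_dot M hM v v]
          exact Finset.sum_congr rfl fun k _ => sq _
        have hpw : ∑ k, ((hM.eigenvectorBasis k : (A ⊕ B) → ℝ) ⬝ᵥ w)^2 = w ⬝ᵥ w := by
          rw [parseval_dot M hM w w]
          exact Finset.sum_congr rfl fun k _ => sq _
        rw [hpv, hpw, ← Real.sqrt_mul hvvnn]
        exact Real.sqrt_le_sqrt (mul_le_mul hvv hww hwwnn (Nat.cast_nonneg _))
end

section
/- The number of h-planes of F_q^d containing both of two distinct k-planes V₁, V₂ with rank(V₁,V₂) = t equals (1+o(1))·q^{(d−h)(h−t)} as q → ∞ (with d,h,k,t fixed). -/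
open Pointwise Module Submodule

section
variable {F V : Type*} [Field F] [AddCommGroup V] [Module F V]

/-- rank-nullity for a submodule containing T, mapped to the quotient. -/
lemma finrank_map_mkQ_add [FiniteDimensional F V] (T U : Submodule F V) (hTU : T ≤ U) :
    finrank F (U.map T.mkQ) + finrank F T = finrank F U := by
  have h := LinearMap.finrank_range_add_finrank_ker (T.mkQ.domRestrict U)
  rwa [LinearMap.range_domRestrict, LinearMap.ker_domRestrict, T.ker_mkQ,
    LinearEquiv.finrank_eq (Submodule.comapSubtypeEquivOfLe hTU)] at h

/-- Subspaces of dimension h containing T correspond to subspaces of the quotient. -/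
noncomputable def aboveEquiv (T : Submodule F V) [FiniteDimensional F V] (h : ℕ)
    (ht : finrank F T ≤ h) :
    {W : Submodule F V // finrank F W = h ∧ T ≤ W} ≃
      {W : Submodule F (V ⧸ T) // finrank F W = h - finrank F T} where
  toFun W := ⟨W.1.map T.mkQ, by
    have := finrank_map_mkQ_add T W.1 W.2.2
    rw [W.2.1] at this; omega
    ⟩
  invFun W' := ⟨W'.1.comap T.mkQ, by
    have hle : T ≤ W'.1.comap T.mkQ := by
      exact fun x hx => by simp [Submodule.mem_comap, (Submodule.Quotient.mk_eq_zero T).2 hx, Submodule.mkQ_apply]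
    have h2 : (W'.1.comap T.mkQ).map T.mkQ = W'.1 :=
      Submodule.map_comap_eq_of_surjective (Submodule.mkQ_surjective T) _
    have := finrank_map_mkQ_add T (W'.1.comap T.mkQ) hle
    rw [h2, W'.2] at this
    exact ⟨by omega, hle⟩⟩
  left_inv W := by
    ext1
    show (W.1.map T.mkQ).comap T.mkQ = W.1
    rw [Submodule.comap_map_eq, T.ker_mkQ, sup_eq_left.2 W.2.2]
  right_inv W' := by
    ext1
    exact Submodule.map_comap_eq_of_surjective (Submodule.mkQ_surjective T) _

end

section
variable (F V : Type*) [Field F] [AddCommGroup V] [Module F V]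

variable [FiniteDimensional F V] (m : ℕ)

noncomputable def spanMap (s : {s : Fin m → V // LinearIndependent F s}) :
    {W : Submodule F V // finrank F W = m} :=
  ⟨span F (Set.range s.1), by rw [finrank_span_eq_card s.2, Fintype.card_fin]⟩

noncomputable def fiberEquiv (W : {W : Submodule F V // finrank F W = m}) :
    {a : {s : Fin m → V // LinearIndependent F s} // spanMap F V m a = W} ≃
      {s : Fin m → W.1 // LinearIndependent F s} where
  toFun a := ⟨fun i => ⟨a.1.1 i, by
      have h : span F (Set.range a.1.1) = W.1 := congrArg Subtype.val a.2
      exact h ▸ subset_span (Set.mem_range_self i)⟩,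
    LinearIndependent.of_comp W.1.subtype a.1.2⟩
  invFun s := ⟨⟨fun i => (s.1 i : V), s.2.map' W.1.subtype (Submodule.ker_subtype _)⟩,
    Subtype.ext (by
      simp only [spanMap]
      apply Submodule.eq_of_le_of_finrank_eq
      · rw [Submodule.span_le]
        rintro x ⟨i, rfl⟩
        exact (s.1 i).2
      · exact (finrank_span_eq_card (s.2.map' W.1.subtype (Submodule.ker_subtype _))).trans
          (by rw [Fintype.card_fin]; exact W.2.symm))⟩
  left_inv a := Subtype.ext (Subtype.ext rfl)
  right_inv s := Subtype.ext rfl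

noncomputable def liSigmaEquiv :
    {s : Fin m → V // LinearIndependent F s} ≃
      Σ W : {W : Submodule F V // finrank F W = m}, {s : Fin m → W.1 // LinearIndependent F s} :=
  (Equiv.sigmaFiberEquiv (spanMap F V m)).symm.trans
    (Equiv.sigmaCongrRight (fiberEquiv F V m))

lemma card_subspaces_mul [Fintype F] [Finite V]
    (hm : m ≤ finrank F V) :
    Nat.card {W : Submodule F V // finrank F W = m} *
        ∏ i : Fin m, (Fintype.card F ^ m - Fintype.card F ^ i.1)
      = ∏ i : Fin m, (Fintype.card F ^ finrank F V - Fintype.card F ^ i.1) := by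
  classical
  have key := Nat.card_congr (liSigmaEquiv F V m)
  rw [card_linearIndependent hm] at key
  rw [key]
  letI : Fintype V := Fintype.ofFinite V
  haveI : Finite (Submodule F V) :=
    Finite.of_injective (fun W => (W : Set V)) SetLike.coe_injective
  letI : Fintype {W : Submodule F V // finrank F W = m} := Fintype.ofFinite _
  letI : ∀ W : {W : Submodule F V // finrank F W = m},
      Fintype {s : Fin m → W.1 // LinearIndependent F s} := fun W => Fintype.ofFinite _
  rw [Nat.card_eq_fintype_card, Nat.card_eq_fintype_card, Fintype.card_sigma]
  have h2 : ∀ W : {W : Submodule F V // finrank F W = m},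
      Fintype.card {s : Fin m → W.1 // LinearIndependent F s}
        = ∏ i : Fin m, (Fintype.card F ^ m - Fintype.card F ^ i.1) := by
    intro W
    have hle : m ≤ finrank F W.1 := le_of_eq W.2.symm
    rw [← Nat.card_eq_fintype_card, card_linearIndependent hle, W.2]
  rw [Finset.sum_congr rfl fun W _ => h2 W, Finset.sum_const, Finset.card_univ, smul_eq_mul]
end

section
variable {F V : Type*} [Field F] [AddCommGroup V] [Module F V]

lemma sub_mem_of_mem_coset {W : Submodule F V} {x a b : V}
    (ha : a ∈ x +ᵥ (W : Set V)) (hb : b ∈ x +ᵥ (W : Set V)) : a - b ∈ W := by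
  obtain ⟨wa, hwa, rfl⟩ := ha
  obtain ⟨wb, hwb, rfl⟩ := hb
  simpa [vadd_eq_add, add_sub_add_left_eq_sub] using W.sub_mem hwa hwb

lemma vadd_coset_eq (W : Submodule F V) {a b : V} (h : a - b ∈ W) :
    a +ᵥ (W : Set V) = b +ᵥ (W : Set V) := by
  ext y
  simp only [Set.mem_vadd_set, vadd_eq_add]
  constructor
  · rintro ⟨w, hw, rfl⟩
    exact ⟨(a - b) + w, W.add_mem h hw, by abel⟩
  · rintro ⟨w, hw, rfl⟩
    exact ⟨w - (a - b), W.sub_mem hw h, by abel⟩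

lemma card_planes {k : ℕ} (h : ℕ) (u v : Fin k → V) (uc vc : V) :
    Nat.card {S : Set V |
        ∃ (W : Submodule F V) (x : V),
          finrank F W = h ∧ S = x +ᵥ (W : Set V) ∧
            (uc +ᵥ (Submodule.span F (Set.range u) : Set V)) ⊆ S ∧
            (vc +ᵥ (Submodule.span F (Set.range v) : Set V)) ⊆ S}
      = Nat.card {W : Submodule F V //
          finrank F W = h ∧
            Submodule.span F (Set.range u ∪ Set.range v ∪ {vc - uc}) ≤ W} := by
  apply Nat.card_congr
  symm
  set T := Submodule.span F (Set.range u ∪ Set.range v ∪ {vc - uc}) with hT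
  refine Equiv.ofBijective
    (fun W => ⟨uc +ᵥ (W.1 : Set V), W.1, uc, W.2.1, rfl, ?_, ?_⟩) ⟨?_, ?_⟩
  · -- uc + span u ⊆ uc + W
    rintro y ⟨w, hw, rfl⟩
    refine ⟨w, ?_, rfl⟩
    exact W.2.2 (Submodule.span_mono (Set.subset_union_left.trans Set.subset_union_left) hw)
  · -- vc + span v ⊆ uc + W
    rintro y ⟨w, hw, rfl⟩
    refine ⟨(vc - uc) + w, W.1.add_mem
      (W.2.2 (Submodule.subset_span (Set.mem_union_right _ rfl)))
      (W.2.2 (Submodule.span_mono (Set.subset_union_right.trans Set.subset_union_left) hw)),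
      by simp [vadd_eq_add]; abel⟩
  · -- injective
    rintro W W' hWW'
    have h1 : uc +ᵥ (W.1 : Set V) = uc +ᵥ (W'.1 : Set V) := congrArg Subtype.val hWW'
    have h2 : (W.1 : Set V) = (W'.1 : Set V) := by
      have := congrArg (fun s => (-uc) +ᵥ s) h1
      simpa [vadd_vadd] using this
    exact Subtype.ext (SetLike.coe_set_eq.1 h2)
  · -- surjective
    rintro ⟨S, W, x, hW, rfl, h1, h2⟩
    have hucS : uc ∈ x +ᵥ (W : Set V) := h1 ⟨0, Submodule.zero_mem _, by simp⟩
    have hvcS : vc ∈ x +ᵥ (W : Set V) := h2 ⟨0, Submodule.zero_mem _, by simp⟩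
    have hTW : T ≤ W := by
      rw [hT, Submodule.span_le]
      refine Set.union_subset (Set.union_subset ?_ ?_) ?_
      · rintro _ ⟨i, rfl⟩
        have hm : uc + u i ∈ x +ᵥ (W : Set V) :=
          h1 ⟨u i, Submodule.subset_span (Set.mem_range_self i), rfl⟩
        simpa using sub_mem_of_mem_coset hm hucS
      · rintro _ ⟨i, rfl⟩
        have hm : vc + v i ∈ x +ᵥ (W : Set V) :=
          h2 ⟨v i, Submodule.subset_span (Set.mem_range_self i), rfl⟩
        simpa using sub_mem_of_mem_coset hm hvcS
      · rintro _ rfl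
        exact sub_mem_of_mem_coset hvcS hucS
    refine ⟨⟨W, hW, hTW⟩, Subtype.ext ?_⟩
    obtain ⟨w, hw, rfl⟩ := hucS
    exact vadd_coset_eq W (by simpa [vadd_eq_add] using hw)

end

lemma prod_sub_ge {ι : Type*} (s : Finset ι) (A c : ℝ) (hA : 0 ≤ A) (hc : 0 ≤ c) (hc1 : c ≤ 1)
    (f : ι → ℝ) (hf : ∀ i ∈ s, 0 ≤ f i) (hfA : ∀ i ∈ s, f i ≤ A * c) :
    A ^ s.card * (1 - s.card * c) ≤ ∏ i ∈ s, (A - f i) := by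
  classical
  induction s using Finset.cons_induction with
  | empty => simp
  | cons a s ha ih =>
    have hf' : ∀ i ∈ s, 0 ≤ f i := fun i hi => hf i (Finset.mem_cons_of_mem hi)
    have hfA' : ∀ i ∈ s, f i ≤ A * c := fun i hi => hfA i (Finset.mem_cons_of_mem hi)
    have ih' := ih hf' hfA'
    have hfac0 : ∀ i ∈ s, (0:ℝ) ≤ A - f i := fun i hi => by nlinarith [hfA' i hi]
    have hprod0 : (0:ℝ) ≤ ∏ i ∈ s, (A - f i) := Finset.prod_nonneg hfac0
    have hub : ∏ i ∈ s, (A - f i) ≤ A ^ s.card := by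
      calc ∏ i ∈ s, (A - f i) ≤ ∏ _i ∈ s, A :=
            Finset.prod_le_prod hfac0 (fun i hi => by nlinarith [hf' i hi])
      _ = A ^ s.card := Finset.prod_const A
    rw [Finset.prod_cons, Finset.card_cons]
    have ha0 : (0:ℝ) ≤ A - f a := by nlinarith [hfA a (Finset.mem_cons_self a s)]
    have haA : A - f a ≤ A := by nlinarith [hf a (Finset.mem_cons_self a s)]
    have haAc : A * (1 - c) ≤ A - f a := by nlinarith [hfA a (Finset.mem_cons_self a s)]
    rcases le_or_gt (1 - (s.card : ℝ) * c) 0 with hneg | hpos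
    · have : A ^ (s.card + 1) * (1 - (s.card + 1 : ℕ) * c) ≤ 0 := by
        push_cast
        apply mul_nonpos_of_nonneg_of_nonpos (pow_nonneg hA _)
        nlinarith
      exact this.trans (mul_nonneg ha0 hprod0)
    · calc A ^ (s.card + 1) * (1 - (s.card + 1 : ℕ) * c)
          ≤ (A * (1 - c)) * (A ^ s.card * (1 - s.card * c)) := by
            push_cast; rw [pow_succ]; nlinarith [pow_nonneg hA s.card]
      _ ≤ (A - f a) * (A ^ s.card * (1 - s.card * c)) := by
            apply mul_le_mul_of_nonneg_right haAc
            positivity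
      _ ≤ (A - f a) * ∏ i ∈ s, (A - f i) := mul_le_mul_of_nonneg_left ih' ha0

lemma key_estimate (q n m N D P : ℕ) (ε : ℝ) (hε : 0 < ε) (hq2 : 2 ≤ q)
    (hmn : m ≤ n)
    (hD : D = ∏ i : Fin m, (q ^ m - q ^ i.1))
    (hP : P = ∏ i : Fin m, (q ^ n - q ^ i.1))
    (hNDP : N * D = P)
    (hqε : (1 + ε) * m ≤ ε * q) :
    |(N : ℝ) - (q : ℝ) ^ (m * (n - m))| ≤ ε * (q : ℝ) ^ (m * (n - m)) := by
  have hq0 : (0:ℝ) < q := by positivity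
  have hq1R : (1:ℝ) ≤ q := by exact_mod_cast le_trans (by norm_num) hq2
  have hDpos : 0 < D := by
    subst hD
    apply Finset.prod_pos
    intro i _
    exact Nat.sub_pos_of_lt (Nat.pow_lt_pow_right (by omega) i.2)
  -- lower bound in ℕ : q^(m*(n-m)) * D ≤ P
  have hfac : ∀ i : Fin m, q ^ (n - m) * (q ^ m - q ^ i.1) ≤ q ^ n - q ^ i.1 := by
    intro i
    have h1 : q ^ (n - m) * (q ^ m - q ^ i.1) = q ^ n - q ^ (n - m + i.1) := by
      rw [Nat.mul_sub, ← pow_add, ← pow_add]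
      congr 2
      omega
    rw [h1]
    exact Nat.sub_le_sub_left (Nat.pow_le_pow_right (by omega) (by omega)) _
  have hlow : q ^ (m * (n - m)) * D ≤ P := by
    subst hD hP
    calc q ^ (m * (n - m)) * ∏ i : Fin m, (q ^ m - q ^ i.1)
        = ∏ i : Fin m, (q ^ (n - m) * (q ^ m - q ^ i.1)) := by
          rw [Finset.prod_mul_distrib, Finset.prod_const, Finset.card_univ, Fintype.card_fin,
            ← pow_mul, mul_comm (n - m) m]
      _ ≤ ∏ i : Fin m, (q ^ n - q ^ i.1) := Finset.prod_le_prod' fun i _ => hfac i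
  have hlowN : q ^ (m * (n - m)) ≤ N := by
    have h2 : q ^ (m * (n - m)) * D ≤ N * D := hNDP ▸ hlow
    exact Nat.le_of_mul_le_mul_right h2 hDpos
  -- upper bound for P in ℕ
  have hPub : P ≤ q ^ (n * m) := by
    subst hP
    calc ∏ i : Fin m, (q ^ n - q ^ i.1) ≤ ∏ _i : Fin m, q ^ n :=
          Finset.prod_le_prod' fun i _ => Nat.sub_le _ _
    _ = q ^ (n * m) := by rw [Finset.prod_const, Finset.card_univ, Fintype.card_fin, ← pow_mul]
  -- real identity : q^e * D = ∏ (q^n - q^(n-m+i))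
  have hDcast : (D:ℝ) = ∏ i : Fin m, ((q:ℝ) ^ m - (q:ℝ) ^ i.1) := by
    subst hD
    rw [Nat.cast_prod]
    refine Finset.prod_congr rfl fun i _ => ?_
    rw [Nat.cast_sub (Nat.pow_le_pow_right (by omega) i.2.le)]
    push_cast
    ring
  have hIdent : (q:ℝ) ^ (m * (n - m)) * D = ∏ i : Fin m, ((q:ℝ) ^ n - (q:ℝ) ^ (n - m + i.1)) := by
    rw [hDcast]
    calc (q:ℝ) ^ (m * (n - m)) * ∏ i : Fin m, ((q:ℝ) ^ m - (q:ℝ) ^ i.1)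
        = ∏ i : Fin m, ((q:ℝ) ^ (n - m) * ((q:ℝ) ^ m - (q:ℝ) ^ i.1)) := by
          rw [Finset.prod_mul_distrib, Finset.prod_const, Finset.card_univ, Fintype.card_fin,
            ← pow_mul, mul_comm (n - m) m]
      _ = ∏ i : Fin m, ((q:ℝ) ^ n - (q:ℝ) ^ (n - m + i.1)) := by
          refine Finset.prod_congr rfl fun i _ => ?_
          rw [mul_sub, ← pow_add, ← pow_add]
          congr 2
          omega
  -- lower bound for q^e * D via prod_sub_ge
  have hDlb : (1 - (m:ℝ) / q) * (q:ℝ) ^ (n * m) ≤ (q:ℝ) ^ (m * (n - m)) * D := by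
    rw [hIdent]
    have := prod_sub_ge (Finset.univ : Finset (Fin m)) ((q:ℝ) ^ n) (1/q)
      (by positivity) (by positivity) (by rw [div_le_one hq0]; linarith)
      (fun i => (q:ℝ) ^ (n - m + i.1))
      (fun i _ => by positivity)
      (fun i _ => by
        rw [mul_one_div, le_div_iff₀ hq0, ← pow_succ]
        exact pow_le_pow_right₀ hq1R (by omega))
    rw [Finset.card_univ, Fintype.card_fin, ← pow_mul] at this
    calc (1 - (m:ℝ) / q) * (q:ℝ) ^ (n * m)
        = (q:ℝ) ^ (n * m) * (1 - m * (1/q)) := by ring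
      _ ≤ _ := this
  -- upper bound : N ≤ (1+ε) q^e
  have hone : (1:ℝ) ≤ (1 + ε) * (1 - (m:ℝ) / q) := by
    have hdiv : (1 + ε) * (m:ℝ) / q ≤ ε := by
      rw [div_le_iff₀ hq0]
      calc (1 + ε) * (m:ℝ) ≤ ε * q := hqε
      _ = ε * q := rfl
    have : (1 + ε) * ((m:ℝ) / q) ≤ ε := by rw [← mul_div_assoc]; exact hdiv
    nlinarith [hq0]
  have hupper : (N:ℝ) ≤ (1 + ε) * (q:ℝ) ^ (m * (n - m)) := by
    rw [← mul_le_mul_iff_of_pos_right (show (0:ℝ) < D by exact_mod_cast hDpos)]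
    have hPN : (N:ℝ) * D = P := by exact_mod_cast hNDP
    rw [hPN]
    calc (P:ℝ) ≤ (q:ℝ) ^ (n * m) := by exact_mod_cast hPub
      _ = 1 * (q:ℝ) ^ (n * m) := (one_mul _).symm
      _ ≤ ((1 + ε) * (1 - (m:ℝ) / q)) * (q:ℝ) ^ (n * m) := by
          apply mul_le_mul_of_nonneg_right hone (by positivity)
      _ = (1 + ε) * ((1 - (m:ℝ) / q) * (q:ℝ) ^ (n * m)) := by ring
      _ ≤ (1 + ε) * ((q:ℝ) ^ (m * (n - m)) * D) := by
          apply mul_le_mul_of_nonneg_left hDlb (by linarith)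
      _ = (1 + ε) * (q:ℝ) ^ (m * (n - m)) * D := by ring
  have hlowR : (q:ℝ) ^ (m * (n - m)) ≤ N := by exact_mod_cast hlowN
  have hpow0 : (0:ℝ) ≤ (q:ℝ) ^ (m * (n - m)) := by positivity
  rw [abs_le]
  constructor <;> nlinarith

/-- With `d, h, k, t` fixed (`t ≤ h < d`), the number of h-planes of
`F_q^d` containing both of two distinct k-planes `V₁, V₂` with `rank(V₁,V₂) = t`
is `(1 + o(1)) · q^{(d-h)(h-t)}` as `q → ∞`. -/
theorem card_h_planes_containing_two_k_planes_asymp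
    (d k h t : ℕ) (hth : t ≤ h) (hhd : h < d) :
    ∀ ε : ℝ, 0 < ε → ∃ q₀ : ℕ,
      ∀ (F : Type) [Field F] [Fintype F], q₀ ≤ Fintype.card F →
        ∀ (u v : Fin k → Fin d → F) (uc vc : Fin d → F),
          LinearIndependent F u → LinearIndependent F v →
          (uc +ᵥ (Submodule.span F (Set.range u) : Set (Fin d → F))) ≠
            (vc +ᵥ (Submodule.span F (Set.range v) : Set (Fin d → F))) →
          Module.finrank F
            (Submodule.span F (Set.range u ∪ Set.range v ∪ {vc - uc})) = t →
          |(Nat.card {S : Set (Fin d → F) |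
              ∃ (W : Submodule F (Fin d → F)) (x : Fin d → F),
                Module.finrank F W = h ∧ S = x +ᵥ (W : Set (Fin d → F)) ∧
                  (uc +ᵥ (Submodule.span F (Set.range u) : Set (Fin d → F))) ⊆ S ∧
                  (vc +ᵥ (Submodule.span F (Set.range v) : Set (Fin d → F))) ⊆ S} : ℝ) -
            (Fintype.card F : ℝ) ^ ((d - h) * (h - t))| ≤
          ε * (Fintype.card F : ℝ) ^ ((d - h) * (h - t)) := by
  intro ε hε
  refine ⟨max 2 (⌈(1 + ε) * h / ε⌉₊ + 1), ?_⟩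
  intro F _ _ hq u v uc vc hu hv hne hrank
  set q := Fintype.card F with hqdef
  have hq2 : 2 ≤ q := le_trans (le_max_left _ _) hq
  set T := Submodule.span F (Set.range u ∪ Set.range v ∪ {vc - uc}) with hTdef
  have hT : finrank F T ≤ h := le_of_eq hrank |>.trans hth
  have hVd : finrank F (Fin d → F) = d := by
    rw [Module.finrank_fintype_fun_eq_card, Fintype.card_fin]
  have htd : t ≤ d := by
    have := Submodule.finrank_le T
    rw [hrank, hVd] at this
    omega
  haveI : Finite ((Fin d → F) ⧸ T) := Finite.of_surjective _ (Submodule.mkQ_surjective T)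
  have hquot : finrank F ((Fin d → F) ⧸ T) = d - t := by
    have := Submodule.finrank_quotient_add_finrank T
    rw [hrank, hVd] at this
    omega
  -- chain of cardinality identities
  have e1 := card_planes (F := F) h u v uc vc
  have e2 : Nat.card {W : Submodule F (Fin d → F) // finrank F W = h ∧ T ≤ W}
      = Nat.card {W' : Submodule F ((Fin d → F) ⧸ T) // finrank F W' = h - t} := by
    have := Nat.card_congr (aboveEquiv T h hT)
    rwa [hrank] at this
  set N := Nat.card {W' : Submodule F ((Fin d → F) ⧸ T) // finrank F W' = h - t} with hN
  have e3 := card_subspaces_mul F ((Fin d → F) ⧸ T) (h - t)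
    (by rw [hquot]; omega)
  rw [hquot] at e3
  have hNcard : Nat.card {S : Set (Fin d → F) |
      ∃ (W : Submodule F (Fin d → F)) (x : Fin d → F),
        Module.finrank F W = h ∧ S = x +ᵥ (W : Set (Fin d → F)) ∧
          (uc +ᵥ (Submodule.span F (Set.range u) : Set (Fin d → F))) ⊆ S ∧
          (vc +ᵥ (Submodule.span F (Set.range v) : Set (Fin d → F))) ⊆ S} = N := by
    rw [e1, e2]
  rw [hNcard]
  have hest := key_estimate q (d - t) (h - t) N _ _ ε hε hq2 (by omega) rfl rfl e3 ?_
  · have hee : (h - t) * ((d - t) - (h - t)) = (d - h) * (h - t) := by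
      have : (d - t) - (h - t) = d - h := by omega
      rw [this, mul_comm]
    rwa [hee] at hest
  · -- (1+ε) * (h-t) ≤ ε * q
    have hql : ((⌈(1 + ε) * h / ε⌉₊ + 1 : ℕ) : ℝ) ≤ q := by
      exact_mod_cast le_trans (le_max_right _ _) hq
    have hceil : (1 + ε) * h / ε ≤ (⌈(1 + ε) * h / ε⌉₊ : ℝ) := Nat.le_ceil _
    have hmh : ((h - t : ℕ) : ℝ) ≤ (h : ℕ) := by exact_mod_cast Nat.sub_le h t
    push_cast at hql
    have : (1 + ε) * h ≤ ε * q := by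
      rw [div_le_iff₀ hε] at hceil
      nlinarith
    nlinarith
end
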